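/- For i, j ≥ 1, the identity V_{i,j}(t) = N_i(2t) + N_j(2t) − N_{i+j}(2t) holds, where N_i(t) = (1 − D(t)^i)/(1−4t) is the generating function for pairs of nonintersecting walks starting at distance 2i. -/

import Mathlib

open PowerSeries Finset

/-- Generating function of the Catalan numbers `C_n = (1/(n+1))·binom(2n,n)`. -/
noncomputable def catGF : PowerSeries ℚ :=
  PowerSeries.mk fun n => (Nat.choose (2 * n) n : ℚ) / (n + 1)

/-- `D(t) = C(t) - 1`. -/
noncomputable def DGF : PowerSeries ℚ := catGF - 1

/-- A lattice walk of length `n` with steps `±1`. -/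
def IsWalk (n : ℕ) (L : Fin (n + 1) → ℤ) : Prop :=
  ∀ k : Fin n, |L k.succ - L k.castSucc| = 1

/-- Two walks intersect (share a common point at the same time). -/
def Meets {m : ℕ} (L L' : Fin m → ℤ) : Prop := ∃ k, L k = L' k

/-- All triples of walks of length `n` starting at heights `0, 2i, 2i+2j`. -/
def USet (i j n : ℕ) :
    Set ((Fin (n + 1) → ℤ) × (Fin (n + 1) → ℤ) × (Fin (n + 1) → ℤ)) :=
  {T | IsWalk n T.1 ∧ IsWalk n T.2.1 ∧ IsWalk n T.2.2 ∧
    T.1 0 = 0 ∧ T.2.1 0 = 2 * i ∧ T.2.2 0 = 2 * i + 2 * j}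

/-- Triples where `L₁` and `L₂` are nonintersecting. -/
def W12Set (i j n : ℕ) := {T ∈ USet i j n | ¬ Meets T.1 T.2.1}

/-- Triples where `L₂` and `L₃` are nonintersecting. -/
def W23Set (i j n : ℕ) := {T ∈ USet i j n | ¬ Meets T.2.1 T.2.2}

/-- Triples where `L₁` intersects `L₃`. -/
def M13Set (i j n : ℕ) := {T ∈ USet i j n | Meets T.1 T.2.2}

/-- Triples where `L₂` intersects both `L₁` and `L₃`. -/
def M1223Set (i j n : ℕ) :=
  {T ∈ USet i j n | Meets T.2.1 T.1 ∧ Meets T.2.1 T.2.2}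

/-- Vicious (pairwise nonintersecting) triples. -/
def VSet (i j n : ℕ) :=
  {T ∈ USet i j n | ¬ Meets T.1 T.2.1 ∧ ¬ Meets T.2.1 T.2.2 ∧ ¬ Meets T.1 T.2.2}

/-- Pairs of walks of length `n` starting at heights `0` and `2i`. -/
def PairSet (i n : ℕ) : Set ((Fin (n + 1) → ℤ) × (Fin (n + 1) → ℤ)) :=
  {P | IsWalk n P.1 ∧ IsWalk n P.2 ∧ P.1 0 = 0 ∧ P.2 0 = 2 * i}

/-- Intersecting pairs. -/
def MSet (i n : ℕ) := {P ∈ PairSet i n | Meets P.1 P.2}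

/-- Nonintersecting (vicious) pairs. -/
def NSet (i n : ℕ) := {P ∈ PairSet i n | ¬ Meets P.1 P.2}

/-- Converging pairs: never meet before time `n`, meet at time `n`. -/
def TSet (i n : ℕ) :=
  {P ∈ PairSet i n | (∀ k : Fin (n + 1), (k : ℕ) < n → P.1 k ≠ P.2 k) ∧
    P.1 (Fin.last n) = P.2 (Fin.last n)}

/-- 2-watermelons of length `n`. -/
def MelonSet (n : ℕ) : Set ((Fin (n + 1) → ℤ) × (Fin (n + 1) → ℤ)) :=
  {P | IsWalk n P.1 ∧ IsWalk n P.2 ∧ P.1 0 = 0 ∧ P.2 0 = 2 ∧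
    P.2 (Fin.last n) = P.1 (Fin.last n) + 2 ∧ ∀ k, P.1 k < P.2 k}

/-- Partial Dyck paths of length `2n` from height `2i` to `0`, strictly positive before the end. -/
def PDyckSet (i n : ℕ) : Set (Fin (2 * n + 1) → ℤ) :=
  {Q | IsWalk (2 * n) Q ∧ Q 0 = 2 * i ∧ Q (Fin.last (2 * n)) = 0 ∧
    ∀ k : Fin (2 * n + 1), (k : ℕ) < 2 * n → 0 < Q k}


section AuxWalk
variable {m : ℕ}

lemma meets_symm' {L L' : Fin m → ℤ} (h : Meets L L') : Meets L' L := by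
  obtain ⟨k, hk⟩ := h; exact ⟨k, hk.symm⟩

lemma not_meets_ne {L L' : Fin m → ℤ} (h : ¬ Meets L L') : ∀ k, L k ≠ L' k :=
  fun k hk => h ⟨k, hk⟩

lemma walk_step {L : Fin (m+1) → ℤ} (h : IsWalk m L) (k : Fin m) :
    L k.succ - L k.castSucc = 1 ∨ L k.succ - L k.castSucc = -1 :=
  abs_eq (by norm_num : (0:ℤ) ≤ 1) |>.mp (h k)

lemma even_diff {P Q : Fin (m+1) → ℤ} (hP : IsWalk m P) (hQ : IsWalk m Q)
    (h0 : Even (Q 0 - P 0)) : ∀ k, Even (Q k - P k) := by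
  intro k
  induction k using Fin.induction with
  | zero => exact h0
  | succ i ih =>
    obtain ⟨r, hr⟩ := ih
    rcases walk_step hP i with h1 | h1 <;> rcases walk_step hQ i with h2 | h2 <;>
      exact ⟨(Q i.succ - P i.succ)/2, by omega⟩

lemma diff_pos {P Q : Fin (m+1) → ℤ} (hP : IsWalk m P) (hQ : IsWalk m Q)
    (h0 : P 0 < Q 0) (he : Even (Q 0 - P 0)) :
    ∀ k : Fin (m+1), (∀ j, j ≤ k → P j ≠ Q j) → P k < Q k := by
  intro k
  induction k using Fin.induction with
  | zero => intro _; exact h0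
  | succ i ih =>
    intro hne
    have h1 : P i.castSucc < Q i.castSucc :=
      ih (fun j hj => hne j (le_trans hj (le_of_lt (Fin.castSucc_lt_succ (i := i)))))
    obtain ⟨r, hr⟩ := even_diff hP hQ he i.castSucc
    have h2 := hne i.succ le_rfl
    rcases walk_step hP i with h3 | h3 <;> rcases walk_step hQ i with h4 | h4 <;> omega

instance {L L' : Fin m → ℤ} : Decidable (Meets L L') := by
  unfold Meets; infer_instance

/-- first meeting time -/
noncomputable def fm (L L' : Fin (m+1) → ℤ) (h : Meets L L') : Fin (m+1) :=
  (Finset.univ.filter fun k => L k = L' k).min' (by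
    obtain ⟨k, hk⟩ := h; exact ⟨k, by simp [hk]⟩)

lemma fm_eq {L L' : Fin (m+1) → ℤ} (h : Meets L L') : L (fm L L' h) = L' (fm L L' h) := by
  have := Finset.min'_mem (Finset.univ.filter fun k => L k = L' k)
    (by obtain ⟨k, hk⟩ := h; exact ⟨k, by simp [hk]⟩)
  simpa [fm] using this

lemma fm_min {L L' : Fin (m+1) → ℤ} (h : Meets L L') {k} (hk : L k = L' k) :
    fm L L' h ≤ k := Finset.min'_le _ _ (by simp [hk])

lemma fm_lt_ne {L L' : Fin (m+1) → ℤ} (h : Meets L L') {k} (hk : k < fm L L' h) :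
    L k ≠ L' k := fun he => absurd (fm_min h he) (not_le.mpr hk)

lemma fm_spec {L L' : Fin (m+1) → ℤ} (h : Meets L L') {s : Fin (m+1)}
    (hs : L s = L' s) (hmin : ∀ k, k < s → L k ≠ L' k) : fm L L' h = s := by
  refine le_antisymm (fm_min h hs) ?_
  by_contra hlt
  exact hmin _ (not_le.mp hlt) (fm_eq h)

/-- swap: follow `L` up to time `s`, then `L'`. -/
def swp (s : Fin (m+1)) (L L' : Fin (m+1) → ℤ) : Fin (m+1) → ℤ :=
  fun k => if k ≤ s then L k else L' k

lemma swp_of_le {s k : Fin (m+1)} (h : k ≤ s) (L L' : Fin (m+1) → ℤ) :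
    swp s L L' k = L k := if_pos h

lemma swp_of_gt {s k : Fin (m+1)} (h : s < k) (L L' : Fin (m+1) → ℤ) :
    swp s L L' k = L' k := if_neg (not_le.mpr h)

lemma swp_zero (s : Fin (m+1)) (L L' : Fin (m+1) → ℤ) : swp s L L' 0 = L 0 :=
  swp_of_le (Fin.zero_le s) L L'

lemma swp_isWalk {s : Fin (m+1)} {L L' : Fin (m+1) → ℤ} (hL : IsWalk m L)
    (hL' : IsWalk m L') (hs : L s = L' s) : IsWalk m (swp s L L') := by
  intro k
  rcases le_or_gt k.succ s with h | h
  · rw [swp_of_le h, swp_of_le (le_trans (le_of_lt (Fin.castSucc_lt_succ (i := k))) h)]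
    exact hL k
  · rw [swp_of_gt h]
    rcases le_or_gt k.castSucc s with h2 | h2
    · have : k.castSucc = s := le_antisymm h2 (by
        rw [Fin.le_def]; rw [Fin.lt_def] at h
        have e1 : (k.succ : Fin (m+1)).val = k.val + 1 := Fin.val_succ k
        have e2 : (k.castSucc).val = k.val := Fin.coe_castSucc k
        omega)
      rw [swp_of_le h2, this, hs, ← this]
      exact hL' k
    · rw [swp_of_gt h2]; exact hL' k

lemma swp_eq_of {s : Fin (m+1)} {A B L : Fin (m+1) → ℤ}
    (h1 : ∀ k, k ≤ s → A k = L k) (h2 : ∀ k, s < k → B k = L k) :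
    swp s A B = L := by
  funext k
  rcases le_or_gt k s with h | h
  · rw [swp_of_le h]; exact h1 k h
  · rw [swp_of_gt h]; exact h2 k h

end AuxWalk

section AuxCount
variable {n : ℕ}

def WalkFrom (n : ℕ) (c : ℤ) : Set (Fin (n+1) → ℤ) := {L | IsWalk n L ∧ L 0 = c}

def walkOf (c : ℤ) (f : Fin n → Bool) : Fin (n+1) → ℤ :=
  fun k => c + ∑ i ∈ Finset.range k.val, (if h : i < n then (if f ⟨i, h⟩ then 1 else -1) else 0)

lemma walkOf_zero (c : ℤ) (f : Fin n → Bool) : walkOf c f 0 = c := by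
  simp [walkOf]

lemma walkOf_step (c : ℤ) (f : Fin n → Bool) (k : Fin n) :
    walkOf c f k.succ - walkOf c f k.castSucc = (if f k then 1 else -1) := by
  simp only [walkOf, Fin.val_succ, Fin.coe_castSucc, Finset.sum_range_succ]
  rw [dif_pos k.isLt]
  simp

lemma walkOf_isWalk (c : ℤ) (f : Fin n → Bool) : IsWalk n (walkOf c f) := by
  intro k
  rw [show walkOf c f k.succ - walkOf c f k.castSucc = _ from walkOf_step c f k]
  by_cases h : f k <;> simp [h]

lemma walk_eq_walkOf {L : Fin (n+1) → ℤ} (hL : IsWalk n L) (c : ℤ) (hc : L 0 = c) :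
    L = walkOf c (fun k => decide (L k.succ = L k.castSucc + 1)) := by
  funext k
  induction k using Fin.induction with
  | zero => simpa [walkOf_zero] using hc
  | succ i ih =>
    have hstep := walkOf_step c (fun k => decide (L k.succ = L k.castSucc + 1)) i
    rcases walk_step hL i with h | h
    · have : decide (L i.succ = L i.castSucc + 1) = true := by simp; omega
      rw [this] at hstep
      simp at hstep
      omega
    · have : decide (L i.succ = L i.castSucc + 1) = false := by
        rw [decide_eq_false_iff_not]; omega
      rw [this] at hstep
      simp at hstep
      omega

noncomputable def walkEquiv (c : ℤ) : (Fin n → Bool) ≃ (WalkFrom n c) where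
  toFun f := ⟨walkOf c f, walkOf_isWalk c f, walkOf_zero c f⟩
  invFun L := fun k => decide (L.1 k.succ = L.1 k.castSucc + 1)
  left_inv f := by
    funext k
    have hstep := walkOf_step c f k
    by_cases h : f k <;> simp [h] at hstep ⊢ <;> omega
  right_inv L := by
    exact Subtype.ext (walk_eq_walkOf L.2.1 c L.2.2).symm

lemma card_walkFrom (c : ℤ) : Nat.card (WalkFrom n c) = 2^n := by
  rw [← Nat.card_congr (walkEquiv c)]
  simp [Nat.card_eq_fintype_card]

lemma walkFrom_finite (c : ℤ) : (WalkFrom n c).Finite := by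
  rw [← Set.finite_coe_iff]
  exact Finite.of_equiv _ (walkEquiv c)

end AuxCount

section Core
variable {n : ℕ}

lemma lt_of_not_meets {P Q : Fin (n+1) → ℤ} (hP : IsWalk n P) (hQ : IsWalk n Q)
    (h0 : P 0 < Q 0) (he : Even (Q 0 - P 0)) (hnm : ¬ Meets P Q) (k : Fin (n+1)) :
    P k < Q k :=
  diff_pos hP hQ h0 he k (fun j _ => not_meets_ne hnm j)

lemma lt_before_fm {P Q : Fin (n+1) → ℤ} (hP : IsWalk n P) (hQ : IsWalk n Q)
    (h0 : P 0 < Q 0) (he : Even (Q 0 - P 0)) (h : Meets P Q) (k : Fin (n+1))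
    (hk : k < fm P Q h) : P k < Q k :=
  diff_pos hP hQ h0 he k (fun j hj => fm_lt_ne h (lt_of_le_of_lt hj hk))

/-- forward map of the tail-swap bijection -/
noncomputable def Fmap (n : ℕ) :
    ((Fin (n+1) → ℤ) × (Fin (n+1) → ℤ) × (Fin (n+1) → ℤ)) →
    (((Fin (n+1) → ℤ) × (Fin (n+1) → ℤ)) × (Fin (n+1) → ℤ)) := fun T =>
  if h : Meets T.2.1 T.2.2 then
    ((T.1, swp (fm T.2.1 T.2.2 h) T.2.2 T.2.1), swp (fm T.2.1 T.2.2 h) T.2.1 T.2.2)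
  else if h' : Meets T.1 T.2.1 then
    ((swp (fm T.1 T.2.1 h') T.1 T.2.1, T.2.2), swp (fm T.1 T.2.1 h') T.2.1 T.1)
  else ((T.1, T.2.2), T.2.1)

/-- backward map of the tail-swap bijection -/
noncomputable def Gmap (n : ℕ) :
    (((Fin (n+1) → ℤ) × (Fin (n+1) → ℤ)) × (Fin (n+1) → ℤ)) →
    ((Fin (n+1) → ℤ) × (Fin (n+1) → ℤ) × (Fin (n+1) → ℤ)) := fun y =>
  if hB : Meets y.2 y.1.2 then
    if hA : Meets y.2 y.1.1 then
      if fm y.2 y.1.2 hB < fm y.2 y.1.1 hA then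
        (y.1.1, swp (fm y.2 y.1.2 hB) y.2 y.1.2, swp (fm y.2 y.1.2 hB) y.1.2 y.2)
      else (swp (fm y.2 y.1.1 hA) y.1.1 y.2, swp (fm y.2 y.1.1 hA) y.2 y.1.1, y.1.2)
    else (y.1.1, swp (fm y.2 y.1.2 hB) y.2 y.1.2, swp (fm y.2 y.1.2 hB) y.1.2 y.2)
  else if hA : Meets y.2 y.1.1 then
    (swp (fm y.2 y.1.1 hA) y.1.1 y.2, swp (fm y.2 y.1.1 hA) y.2 y.1.1, y.1.2)
  else (y.1.1, y.2, y.1.2)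

end Core

section Cases
variable {n : ℕ}

/-- After the tail swap in case 2, `Fmap` recovers the original data. -/
lemma right_case2 {A B P : Fin (n+1) → ℤ} (hB : Meets P B)
    (hcond : ∀ k, k ≤ fm P B hB → P k ≠ A k) :
    Fmap n (A, swp (fm P B hB) P B, swp (fm P B hB) B P) = ((A, B), P) := by
  set s := fm P B hB with hsdef
  have hM : Meets (swp s P B) (swp s B P) :=
    ⟨s, by rw [swp_of_le le_rfl, swp_of_le le_rfl]; exact fm_eq hB⟩
  have hfm : fm (swp s P B) (swp s B P) hM = s := by
    refine fm_spec hM (by rw [swp_of_le le_rfl, swp_of_le le_rfl]; exact fm_eq hB) ?_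
    intro k hk
    rw [swp_of_le hk.le, swp_of_le hk.le]
    exact fm_lt_ne hB hk
  have e1 : swp s (swp s B P) (swp s P B) = B :=
    swp_eq_of (fun k hk => swp_of_le hk B P) (fun k hk => swp_of_gt hk P B)
  have e2 : swp s (swp s P B) (swp s B P) = P :=
    swp_eq_of (fun k hk => swp_of_le hk P B) (fun k hk => swp_of_gt hk B P)
  simp only [Fmap]
  rw [dif_pos hM, hfm]
  show ((A, swp s (swp s B P) (swp s P B)), swp s (swp s P B) (swp s B P)) = ((A, B), P)
  rw [e1, e2]

/-- After the tail swap in case 3, `Fmap` recovers the original data. -/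
lemma right_case3 {A B P : Fin (n+1) → ℤ} (hAB : ¬ Meets A B) (hA : Meets P A)
    (hcond : ∀ k, k ≤ fm P A hA → P k ≠ B k) :
    Fmap n (swp (fm P A hA) A P, swp (fm P A hA) P A, B) = ((A, B), P) := by
  set s := fm P A hA with hsdef
  have hnM : ¬ Meets (swp s P A) B := by
    rintro ⟨k, hk⟩
    replace hk : swp s P A k = B k := hk
    rcases le_or_gt k s with h | h
    · rw [swp_of_le h] at hk; exact hcond k h hk
    · rw [swp_of_gt h] at hk; exact hAB ⟨k, hk⟩
  have hM : Meets (swp s A P) (swp s P A) :=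
    ⟨s, by rw [swp_of_le le_rfl, swp_of_le le_rfl]; exact (fm_eq hA).symm⟩
  have hfm : fm (swp s A P) (swp s P A) hM = s := by
    refine fm_spec hM (by rw [swp_of_le le_rfl, swp_of_le le_rfl]; exact (fm_eq hA).symm) ?_
    intro k hk
    rw [swp_of_le hk.le, swp_of_le hk.le]
    exact (fm_lt_ne hA hk).symm
  have e1 : swp s (swp s A P) (swp s P A) = A :=
    swp_eq_of (fun k hk => swp_of_le hk A P) (fun k hk => swp_of_gt hk P A)
  have e2 : swp s (swp s P A) (swp s A P) = P :=
    swp_eq_of (fun k hk => swp_of_le hk P A) (fun k hk => swp_of_gt hk A P)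
  simp only [Fmap]
  rw [dif_neg hnM, dif_pos hM, hfm]
  show ((swp s (swp s A P) (swp s P A), B), swp s (swp s P A) (swp s A P)) = ((A, B), P)
  rw [e1, e2]

/-- Case-2 image of `Gmap` lies in `W12Set`. -/
lemma g2_mem {i j : ℕ} {A B P : Fin (n+1) → ℤ} (wA : IsWalk n A) (wB : IsWalk n B)
    (wP : IsWalk n P) (a0 : A 0 = 0) (b0 : B 0 = 2 * ((i : ℤ) + (j : ℤ)))
    (p0 : P 0 = 2 * (i : ℤ)) (hAB : ¬ Meets A B) (hB : Meets P B)
    (hcond : ∀ k, k ≤ fm P B hB → P k ≠ A k) :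
    (A, swp (fm P B hB) P B, swp (fm P B hB) B P) ∈ W12Set i j n := by
  set s := fm P B hB with hsdef
  refine ⟨⟨wA, swp_isWalk wP wB (fm_eq hB), swp_isWalk wB wP (fm_eq hB).symm, a0, ?_, ?_⟩, ?_⟩
  · show swp s P B 0 = 2 * (i : ℤ)
    rw [swp_zero, p0]
  · show swp s B P 0 = 2 * (i : ℤ) + 2 * (j : ℤ)
    rw [swp_zero, b0]; ring
  · show ¬ Meets A (swp s P B)
    rintro ⟨k, hk⟩
    rcases le_or_gt k s with h | h
    · rw [swp_of_le h] at hk; exact hcond k h hk.symm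
    · rw [swp_of_gt h] at hk; exact hAB ⟨k, hk⟩

/-- Case-3 image of `Gmap` lies in `W23Set`. -/
lemma g3_mem {i j : ℕ} {A B P : Fin (n+1) → ℤ} (wA : IsWalk n A) (wB : IsWalk n B)
    (wP : IsWalk n P) (a0 : A 0 = 0) (b0 : B 0 = 2 * ((i : ℤ) + (j : ℤ)))
    (p0 : P 0 = 2 * (i : ℤ)) (hAB : ¬ Meets A B) (hA : Meets P A)
    (hcond : ∀ k, k ≤ fm P A hA → P k ≠ B k) :
    (swp (fm P A hA) A P, swp (fm P A hA) P A, B) ∈ W23Set i j n := by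
  set s := fm P A hA with hsdef
  refine ⟨⟨swp_isWalk wA wP (fm_eq hA).symm, swp_isWalk wP wA (fm_eq hA), wB, ?_, ?_, ?_⟩, ?_⟩
  · show swp s A P 0 = 0
    rw [swp_zero, a0]
  · show swp s P A 0 = 2 * (i : ℤ)
    rw [swp_zero, p0]
  · show B 0 = 2 * (i : ℤ) + 2 * (j : ℤ)
    rw [b0]; ring
  · show ¬ Meets (swp s P A) B
    rintro ⟨k, hk⟩
    rcases le_or_gt k s with h | h
    · rw [swp_of_le h] at hk; exact hcond k h hk
    · rw [swp_of_gt h] at hk; exact hAB ⟨k, hk⟩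

end Cases

section Main
variable {n : ℕ}

lemma Gmap_good (i j n : ℕ) :
    ∀ y ∈ (NSet (i+j) n) ×ˢ (WalkFrom n (2*(i:ℤ))),
      Gmap n y ∈ (W12Set i j n ∪ W23Set i j n) ∧ Fmap n (Gmap n y) = y := by
  rintro ⟨⟨A, B⟩, P⟩ hy
  obtain ⟨⟨⟨wA, wB, a0, b0⟩, hAB⟩, wP, p0⟩ := hy
  replace wA : IsWalk n A := wA
  replace wB : IsWalk n B := wB
  replace a0 : A 0 = 0 := a0
  replace b0 : B 0 = 2 * ((i + j : ℕ) : ℤ) := b0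
  replace hAB : ¬ Meets A B := hAB
  replace wP : IsWalk n P := wP
  replace p0 : P 0 = 2 * (i : ℤ) := p0
  have b0' : B 0 = 2 * ((i:ℤ) + (j:ℤ)) := by rw [b0]; push_cast; ring
  simp only [Gmap]
  by_cases hB : Meets P B
  · rw [dif_pos hB]
    by_cases hA : Meets P A
    · rw [dif_pos hA]
      by_cases hlt : fm P B hB < fm P A hA
      · rw [if_pos hlt]
        have hcond : ∀ k, k ≤ fm P B hB → P k ≠ A k :=
          fun k hk => fm_lt_ne hA (lt_of_le_of_lt hk hlt)
        exact ⟨Or.inl (g2_mem wA wB wP a0 b0' p0 hAB hB hcond), right_case2 hB hcond⟩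
      · rw [if_neg hlt]
        have hne : fm P A hA ≠ fm P B hB := by
          intro he
          exact hAB ⟨fm P A hA, (fm_eq hA).symm.trans (by rw [he]; exact fm_eq hB)⟩
        have hlt' : fm P A hA < fm P B hB := lt_of_le_of_ne (not_lt.mp hlt) hne
        have hcond : ∀ k, k ≤ fm P A hA → P k ≠ B k :=
          fun k hk => fm_lt_ne hB (lt_of_le_of_lt hk hlt')
        exact ⟨Or.inr (g3_mem wA wB wP a0 b0' p0 hAB hA hcond), right_case3 hAB hA hcond⟩
    · rw [dif_neg hA]
      have hcond : ∀ k, k ≤ fm P B hB → P k ≠ A k := fun k _ => not_meets_ne hA k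
      exact ⟨Or.inl (g2_mem wA wB wP a0 b0' p0 hAB hB hcond), right_case2 hB hcond⟩
  · rw [dif_neg hB]
    by_cases hA : Meets P A
    · rw [dif_pos hA]
      have hcond : ∀ k, k ≤ fm P A hA → P k ≠ B k := fun k _ => not_meets_ne hB k
      exact ⟨Or.inr (g3_mem wA wB wP a0 b0' p0 hAB hA hcond), right_case3 hAB hA hcond⟩
    · rw [dif_neg hA]
      have hAP : ¬ Meets A P := fun ⟨k, hk⟩ => hA ⟨k, hk.symm⟩
      refine ⟨Or.inl ⟨⟨wA, wP, wB, a0, p0, by show B 0 = 2 * (i : ℤ) + 2 * (j : ℤ); rw [b0']; ring⟩, hAP⟩, ?_⟩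
      simp only [Fmap]
      rw [dif_neg hB, dif_neg hAP]

lemma Fmap_good (i j n : ℕ) (hi : 1 ≤ i) (hj : 1 ≤ j) :
    ∀ T ∈ W12Set i j n ∪ W23Set i j n,
      Fmap n T ∈ (NSet (i+j) n) ×ˢ (WalkFrom n (2*(i:ℤ))) ∧ Gmap n (Fmap n T) = T := by
  rintro ⟨L1, L2, L3⟩ hT
  have hU : (L1, L2, L3) ∈ USet i j n := hT.elim (fun h => h.1) (fun h => h.1)
  obtain ⟨w1, w2, w3, s1, s2, s3⟩ := hU
  replace w1 : IsWalk n L1 := w1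
  replace w2 : IsWalk n L2 := w2
  replace w3 : IsWalk n L3 := w3
  replace s1 : L1 0 = 0 := s1
  replace s2 : L2 0 = 2 * (i : ℤ) := s2
  replace s3 : L3 0 = 2 * (i : ℤ) + 2 * (j : ℤ) := s3
  have p12 : L1 0 < L2 0 := by rw [s1, s2]; omega
  have e12 : Even (L2 0 - L1 0) := ⟨i, by rw [s1, s2]; ring⟩
  have p23 : L2 0 < L3 0 := by rw [s2, s3]; omega
  have e23 : Even (L3 0 - L2 0) := ⟨j, by rw [s2, s3]; ring⟩
  simp only [Fmap]
  by_cases h23 : Meets L2 L3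
  · have h12 : ¬ Meets L1 L2 := by
      rcases hT with h | h
      · exact h.2
      · exact absurd h23 h.2
    rw [dif_pos h23]
    set s := fm L2 L3 h23 with hsdef
    have hlt1 : ∀ k, L1 k < L2 k := lt_of_not_meets w1 w2 p12 e12 h12
    have key : ∀ k, L1 k < swp s L3 L2 k := by
      intro k
      rcases le_or_gt k s with h | h
      · rw [swp_of_le h]
        rcases lt_or_eq_of_le h with h' | h'
        · exact (hlt1 k).trans (lt_before_fm w2 w3 p23 e23 h23 k h')
        · rw [h']
          exact (hlt1 s).trans_eq (fm_eq h23)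
      · rw [swp_of_gt h]; exact hlt1 k
    constructor
    · refine ⟨⟨⟨w1, swp_isWalk w3 w2 (fm_eq h23).symm, s1, ?_⟩, ?_⟩,
        swp_isWalk w2 w3 (fm_eq h23), ?_⟩
      · show swp s L3 L2 0 = 2 * ((i + j : ℕ) : ℤ)
        rw [swp_zero, s3]; push_cast; ring
      · exact fun ⟨k, hk⟩ => absurd hk (ne_of_lt (key k))
      · show swp s L2 L3 0 = 2 * (i : ℤ)
        rw [swp_zero, s2]
    · have hPB : Meets (swp s L2 L3) (swp s L3 L2) :=
        ⟨s, by rw [swp_of_le le_rfl, swp_of_le le_rfl]; exact fm_eq h23⟩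
      have hfmPB : fm _ _ hPB = s :=
        fm_spec hPB (by rw [swp_of_le le_rfl, swp_of_le le_rfl]; exact fm_eq h23)
          (fun k hk => by rw [swp_of_le hk.le, swp_of_le hk.le]; exact fm_lt_ne h23 hk)
      have hPA : ∀ k, k ≤ s → swp s L2 L3 k ≠ L1 k :=
        fun k hk => by rw [swp_of_le hk]; exact fun he => not_meets_ne h12 k he.symm
      have e1 : swp s (swp s L2 L3) (swp s L3 L2) = L2 :=
        swp_eq_of (fun k hk => swp_of_le hk L2 L3) (fun k hk => swp_of_gt hk L3 L2)
      have e2 : swp s (swp s L3 L2) (swp s L2 L3) = L3 :=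
        swp_eq_of (fun k hk => swp_of_le hk L3 L2) (fun k hk => swp_of_gt hk L2 L3)
      simp only [Gmap]
      rw [dif_pos hPB]
      by_cases hA : Meets (swp s L2 L3) L1
      · rw [dif_pos hA]
        have hlt : fm _ _ hPB < fm _ _ hA := by
          rw [hfmPB]
          by_contra hle
          exact hPA _ (not_lt.mp hle) (fm_eq hA)
        rw [if_pos hlt, hfmPB]
        show (L1, swp s (swp s L2 L3) (swp s L3 L2),
          swp s (swp s L3 L2) (swp s L2 L3)) = (L1, L2, L3)
        rw [e1, e2]
      · rw [dif_neg hA, hfmPB]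
        show (L1, swp s (swp s L2 L3) (swp s L3 L2),
          swp s (swp s L3 L2) (swp s L2 L3)) = (L1, L2, L3)
        rw [e1, e2]
  · rw [dif_neg h23]
    have hlt23 : ∀ k, L2 k < L3 k := lt_of_not_meets w2 w3 p23 e23 h23
    by_cases h12 : Meets L1 L2
    · rw [dif_pos h12]
      set s := fm L1 L2 h12 with hsdef
      have key : ∀ k, swp s L1 L2 k < L3 k := by
        intro k
        rcases le_or_gt k s with h | h
        · rw [swp_of_le h]
          rcases lt_or_eq_of_le h with h' | h'
          · exact (lt_before_fm w1 w2 p12 e12 h12 k h').trans (hlt23 k)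
          · rw [h']
            exact lt_of_le_of_lt (le_of_eq (fm_eq h12)) (hlt23 s)
        · rw [swp_of_gt h]; exact hlt23 k
      constructor
      · refine ⟨⟨⟨swp_isWalk w1 w2 (fm_eq h12), w3, ?_, ?_⟩, ?_⟩,
          swp_isWalk w2 w1 (fm_eq h12).symm, ?_⟩
        · show swp s L1 L2 0 = 0
          rw [swp_zero, s1]
        · show L3 0 = 2 * ((i + j : ℕ) : ℤ)
          rw [s3]; push_cast; ring
        · exact fun ⟨k, hk⟩ => absurd hk (ne_of_lt (key k))
        · show swp s L2 L1 0 = 2 * (i : ℤ)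
          rw [swp_zero, s2]
      · have hPA : Meets (swp s L2 L1) (swp s L1 L2) :=
          ⟨s, by rw [swp_of_le le_rfl, swp_of_le le_rfl]; exact (fm_eq h12).symm⟩
        have hfmPA : fm _ _ hPA = s :=
          fm_spec hPA (by rw [swp_of_le le_rfl, swp_of_le le_rfl]; exact (fm_eq h12).symm)
            (fun k hk => by
              rw [swp_of_le hk.le, swp_of_le hk.le]
              exact fun he => fm_lt_ne h12 hk he.symm)
        have hPk : ∀ k, k ≤ s → swp s L2 L1 k ≠ L3 k :=
          fun k hk => by rw [swp_of_le hk]; exact not_meets_ne h23 k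
        have e1 : swp s (swp s L1 L2) (swp s L2 L1) = L1 :=
          swp_eq_of (fun k hk => swp_of_le hk L1 L2) (fun k hk => swp_of_gt hk L2 L1)
        have e2 : swp s (swp s L2 L1) (swp s L1 L2) = L2 :=
          swp_eq_of (fun k hk => swp_of_le hk L2 L1) (fun k hk => swp_of_gt hk L1 L2)
        simp only [Gmap]
        by_cases hB : Meets (swp s L2 L1) L3
        · rw [dif_pos hB, dif_pos hPA]
          have hnlt : ¬ (fm _ _ hB < fm _ _ hPA) := by
            rw [hfmPA]
            intro hlt
            exact hPk _ hlt.le (fm_eq hB)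
          rw [if_neg hnlt, hfmPA]
          show (swp s (swp s L1 L2) (swp s L2 L1),
            swp s (swp s L2 L1) (swp s L1 L2), L3) = (L1, L2, L3)
          rw [e1, e2]
        · rw [dif_neg hB, dif_pos hPA, hfmPA]
          show (swp s (swp s L1 L2) (swp s L2 L1),
            swp s (swp s L2 L1) (swp s L1 L2), L3) = (L1, L2, L3)
          rw [e1, e2]
    · rw [dif_neg h12]
      have hlt12 : ∀ k, L1 k < L2 k := lt_of_not_meets w1 w2 p12 e12 h12
      constructor
      · refine ⟨⟨⟨w1, w3, s1, ?_⟩, ?_⟩, w2, s2⟩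
        · show L3 0 = 2 * ((i + j : ℕ) : ℤ)
          rw [s3]; push_cast; ring
        · exact fun ⟨k, hk⟩ => absurd hk (ne_of_lt ((hlt12 k).trans (hlt23 k)))
      · have h21 : ¬ Meets L2 L1 := fun ⟨k, hk⟩ => h12 ⟨k, hk.symm⟩
        simp only [Gmap]
        rw [dif_neg h23, dif_neg h21]

end Main

section Count

lemma card_of_bijOn {α β : Type*} {f : α → β} {s : Set α} {t : Set β}
    (h : Set.BijOn f s t) : Nat.card s = Nat.card t := by
  rw [Nat.card_coe_set_eq, Nat.card_coe_set_eq, ← h.image_eq,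
    Set.ncard_image_of_injOn h.injOn]

lemma set_card_prod {α β : Type*} (s : Set α) (t : Set β) :
    Nat.card ↥(s ×ˢ t) = Nat.card s * Nat.card t := by
  rw [Nat.card_congr (Equiv.Set.prod s t), Nat.card_prod]

lemma isWalk_shift {n : ℕ} {L : Fin (n+1) → ℤ} (hL : IsWalk n L) (c : ℤ) :
    IsWalk n (fun k => L k + c) := by
  intro k
  have : (L k.succ + c) - (L k.castSucc + c) = L k.succ - L k.castSucc := by ring
  rw [this]
  exact hL k

lemma meets_shift {m : ℕ} {L L' : Fin m → ℤ} (c : ℤ) :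
    Meets (fun k => L k + c) (fun k => L' k + c) ↔ Meets L L' := by
  constructor
  · rintro ⟨k, hk⟩
    replace hk : L k + c = L' k + c := hk
    exact ⟨k, by omega⟩
  · rintro ⟨k, hk⟩
    refine ⟨k, ?_⟩
    show L k + c = L' k + c
    omega

lemma W12_finite (i j n : ℕ) : (W12Set i j n).Finite := by
  refine Set.Finite.subset ((walkFrom_finite 0).prod
    ((walkFrom_finite (2*(i:ℤ))).prod (walkFrom_finite (2*(i:ℤ)+2*(j:ℤ))))) ?_
  rintro ⟨L1, L2, L3⟩ ⟨⟨w1, w2, w3, s1, s2, s3⟩, -⟩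
  exact ⟨⟨w1, s1⟩, ⟨w2, s2⟩, w3, s3⟩

lemma W23_finite (i j n : ℕ) : (W23Set i j n).Finite := by
  refine Set.Finite.subset ((walkFrom_finite 0).prod
    ((walkFrom_finite (2*(i:ℤ))).prod (walkFrom_finite (2*(i:ℤ)+2*(j:ℤ))))) ?_
  rintro ⟨L1, L2, L3⟩ ⟨⟨w1, w2, w3, s1, s2, s3⟩, -⟩
  exact ⟨⟨w1, s1⟩, ⟨w2, s2⟩, w3, s3⟩

lemma card_W12 (i j n : ℕ) :
    Nat.card (W12Set i j n) = Nat.card (NSet i n) * 2^n := by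
  have hbij : Set.BijOn (fun T : (Fin (n+1) → ℤ) × (Fin (n+1) → ℤ) × (Fin (n+1) → ℤ) =>
      ((T.1, T.2.1), T.2.2)) (W12Set i j n)
      ((NSet i n) ×ˢ (WalkFrom n (2*(i:ℤ)+2*(j:ℤ)))) := by
    refine Set.InvOn.bijOn (f' := fun y => (y.1.1, y.1.2, y.2)) ⟨fun T _ => rfl, fun y _ => rfl⟩
      ?_ ?_
    · rintro ⟨L1, L2, L3⟩ ⟨⟨w1, w2, w3, s1, s2, s3⟩, hnm⟩
      exact ⟨⟨⟨w1, w2, s1, s2⟩, hnm⟩, w3, s3⟩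
    · rintro ⟨⟨A, B⟩, P⟩ ⟨⟨⟨wA, wB, a0, b0⟩, hnm⟩, wP, p0⟩
      exact ⟨⟨wA, wB, wP, a0, b0, p0⟩, hnm⟩
  rw [card_of_bijOn hbij, set_card_prod, card_walkFrom]

lemma card_W23 (i j n : ℕ) :
    Nat.card (W23Set i j n) = Nat.card (NSet j n) * 2^n := by
  have hbij : Set.BijOn (fun T : (Fin (n+1) → ℤ) × (Fin (n+1) → ℤ) × (Fin (n+1) → ℤ) =>
      (((fun k => T.2.1 k + (-(2*(i:ℤ)))), (fun k => T.2.2 k + (-(2*(i:ℤ))))), T.1))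
      (W23Set i j n) ((NSet j n) ×ˢ (WalkFrom n 0)) := by
    refine Set.InvOn.bijOn
      (f' := fun y => (y.2, (fun k => y.1.1 k + 2*(i:ℤ)), (fun k => y.1.2 k + 2*(i:ℤ))))
      ⟨?_, ?_⟩ ?_ ?_
    · rintro ⟨L1, L2, L3⟩ -
      show (L1, (fun k => L2 k + -(2*(i:ℤ)) + 2*(i:ℤ)), (fun k => L3 k + -(2*(i:ℤ)) + 2*(i:ℤ)))
        = (L1, L2, L3)
      have e2 : (fun k => L2 k + -(2*(i:ℤ)) + 2*(i:ℤ)) = L2 := by funext k; ring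
      have e3 : (fun k => L3 k + -(2*(i:ℤ)) + 2*(i:ℤ)) = L3 := by funext k; ring
      rw [e2, e3]
    · rintro ⟨⟨A, B⟩, P⟩ -
      show (((fun k => A k + 2*(i:ℤ) + -(2*(i:ℤ))), (fun k => B k + 2*(i:ℤ) + -(2*(i:ℤ)))), P)
        = ((A, B), P)
      have eA : (fun k => A k + 2*(i:ℤ) + -(2*(i:ℤ))) = A := by funext k; ring
      have eB : (fun k => B k + 2*(i:ℤ) + -(2*(i:ℤ))) = B := by funext k; ring
      rw [eA, eB]
    · rintro ⟨L1, L2, L3⟩ ⟨⟨w1, w2, w3, s1, s2, s3⟩, hnm⟩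
      replace w1 : IsWalk n L1 := w1
      replace w2 : IsWalk n L2 := w2
      replace w3 : IsWalk n L3 := w3
      replace s1 : L1 0 = 0 := s1
      replace s2 : L2 0 = 2 * (i : ℤ) := s2
      replace s3 : L3 0 = 2 * (i : ℤ) + 2 * (j : ℤ) := s3
      replace hnm : ¬ Meets L2 L3 := hnm
      refine ⟨⟨⟨isWalk_shift w2 _, isWalk_shift w3 _, by show L2 0 + -(2*(i:ℤ)) = 0; omega,
        by show L3 0 + -(2*(i:ℤ)) = 2 * (j : ℤ); omega⟩, ?_⟩, w1, s1⟩
      show ¬ Meets (fun k => L2 k + -(2*(i:ℤ))) (fun k => L3 k + -(2*(i:ℤ)))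
      rw [meets_shift]
      exact hnm
    · rintro ⟨⟨A, B⟩, P⟩ ⟨⟨⟨wA, wB, a0, b0⟩, hnm⟩, wP, p0⟩
      replace wA : IsWalk n A := wA
      replace wB : IsWalk n B := wB
      replace a0 : A 0 = 0 := a0
      replace b0 : B 0 = 2 * (j : ℤ) := b0
      replace hnm : ¬ Meets A B := hnm
      replace wP : IsWalk n P := wP
      replace p0 : P 0 = 0 := p0
      refine ⟨⟨wP, isWalk_shift wA _, isWalk_shift wB _, p0, by show A 0 + 2*(i:ℤ) = 2*(i:ℤ); omega,
        by show B 0 + 2*(i:ℤ) = 2*(i:ℤ) + 2*(j:ℤ); omega⟩, ?_⟩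
      show ¬ Meets (fun k => A k + 2*(i:ℤ)) (fun k => B k + 2*(i:ℤ))
      rw [meets_shift]
      exact hnm
  rw [card_of_bijOn hbij, set_card_prod, card_walkFrom]

lemma VSet_eq_inter (i j n : ℕ) (hi : 1 ≤ i) (hj : 1 ≤ j) :
    VSet i j n = W12Set i j n ∩ W23Set i j n := by
  ext ⟨L1, L2, L3⟩
  constructor
  · rintro ⟨hU, h12, h23, h13⟩
    exact ⟨⟨hU, h12⟩, ⟨hU, h23⟩⟩
  · rintro ⟨⟨hU, h12⟩, ⟨-, h23⟩⟩
    refine ⟨hU, h12, h23, ?_⟩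
    obtain ⟨w1, w2, w3, s1, s2, s3⟩ := hU
    replace w1 : IsWalk n L1 := w1
    replace w2 : IsWalk n L2 := w2
    replace w3 : IsWalk n L3 := w3
    replace s1 : L1 0 = 0 := s1
    replace s2 : L2 0 = 2 * (i : ℤ) := s2
    replace s3 : L3 0 = 2 * (i : ℤ) + 2 * (j : ℤ) := s3
    replace h12 : ¬ Meets L1 L2 := h12
    replace h23 : ¬ Meets L2 L3 := h23
    have p12 : L1 0 < L2 0 := by rw [s1, s2]; omega
    have e12 : Even (L2 0 - L1 0) := ⟨i, by rw [s1, s2]; ring⟩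
    have p23 : L2 0 < L3 0 := by rw [s2, s3]; omega
    have e23 : Even (L3 0 - L2 0) := ⟨j, by rw [s2, s3]; ring⟩
    have h1 := lt_of_not_meets w1 w2 p12 e12 h12
    have h2 := lt_of_not_meets w2 w3 p23 e23 h23
    exact fun ⟨k, hk⟩ => absurd hk (ne_of_lt ((h1 k).trans (h2 k)))

lemma main_count (i j n : ℕ) (hi : 1 ≤ i) (hj : 1 ≤ j) :
    Nat.card (VSet i j n) + Nat.card (NSet (i+j) n) * 2^n
      = Nat.card (NSet i n) * 2^n + Nat.card (NSet j n) * 2^n := by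
  have hbij : Set.BijOn (Fmap n) (W12Set i j n ∪ W23Set i j n)
      ((NSet (i+j) n) ×ˢ (WalkFrom n (2*(i:ℤ)))) :=
    Set.InvOn.bijOn ⟨fun T hT => (Fmap_good i j n hi hj T hT).2,
      fun y hy => (Gmap_good i j n y hy).2⟩
      (fun T hT => (Fmap_good i j n hi hj T hT).1) (fun y hy => (Gmap_good i j n y hy).1)
  have hU : Nat.card ↥(W12Set i j n ∪ W23Set i j n) = Nat.card (NSet (i+j) n) * 2^n := by
    rw [card_of_bijOn hbij, set_card_prod, card_walkFrom]
  have hie := Set.ncard_union_add_ncard_inter (W12Set i j n) (W23Set i j n)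
    (W12_finite i j n) (W23_finite i j n)
  rw [← Nat.card_coe_set_eq, ← Nat.card_coe_set_eq, ← Nat.card_coe_set_eq,
    ← Nat.card_coe_set_eq] at hie
  rw [VSet_eq_inter i j n hi hj, hU.symm, card_W12 i j n, card_W23 i j n] at *
  omega

end Count

theorem stmt17 (i j : ℕ) (hi : 1 ≤ i) (hj : 1 ≤ j) :
    PowerSeries.mk (fun n => (Nat.card (VSet i j n) : ℚ)) =
      PowerSeries.rescale (2 : ℚ) (PowerSeries.mk fun n => (Nat.card (NSet i n) : ℚ)) +
        PowerSeries.rescale (2 : ℚ) (PowerSeries.mk fun n => (Nat.card (NSet j n) : ℚ)) -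
        PowerSeries.rescale (2 : ℚ) (PowerSeries.mk fun n => (Nat.card (NSet (i + j) n) : ℚ)) := by
  refine PowerSeries.ext fun n => ?_
  have key := main_count i j n hi hj
  have keyQ : (Nat.card (VSet i j n) : ℚ) + (Nat.card (NSet (i+j) n) : ℚ) * 2^n
      = (Nat.card (NSet i n) : ℚ) * 2^n + (Nat.card (NSet j n) : ℚ) * 2^n := by
    exact_mod_cast congrArg (fun x : ℕ => (x : ℚ)) key
  simp only [map_sub, map_add, PowerSeries.coeff_mk, PowerSeries.coeff_rescale]
  linarith
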